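/- Let a, b be nonzero rational numbers that are multiplicatively independent (i.e., a^x * b^y = 1 with integers x, y implies x = y = 0). Then the set of primes p for which (b mod p) lies in the subgroup of (Z/pZ)* generated by (a mod p) is infinite. (Here only primes not dividing the numerators or denominators of a and b are considered.) -/

import Mathlib

lemma int_pow_totient (q : ℕ) (c : ℤ) (h : Nat.Coprime c.natAbs q) :
    (c : ZMod q) ^ q.totient = 1 := by
  have hu : IsUnit (c : ZMod q) := by
    rcases Int.natAbs_eq c with h1 | h1 <;> rw [h1]
    · rw [Int.cast_natCast]; exact (ZMod.isUnit_iff_coprime _ _).mpr h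
    · rw [Int.cast_neg, Int.cast_natCast]
      exact ((ZMod.isUnit_iff_coprime _ _).mpr h).neg
  calc (c : ZMod q) ^ q.totient = ((hu.unit : ZMod q)) ^ q.totient := by rw [hu.unit_spec]
    _ = ((hu.unit ^ q.totient : (ZMod q)ˣ) : ZMod q) := by push_cast; ring
    _ = 1 := by rw [ZMod.pow_totient]; rfl

lemma A_period (q : ℕ) (c d e f : ℤ)
    (hc : Nat.Coprime c.natAbs q) (hd : Nat.Coprime d.natAbs q) (n₀ s : ℕ) :
    ((c ^ (n₀ + s * q.totient) * f - e * d ^ (n₀ + s * q.totient) : ℤ) : ZMod q)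
      = ((c ^ n₀ * f - e * d ^ n₀ : ℤ) : ZMod q) := by
  push_cast
  rw [pow_add, pow_add, mul_comm s q.totient, pow_mul, pow_mul,
    int_pow_totient _ _ hc, int_pow_totient _ _ hd]
  ring

lemma pow_succ_ge (l : ℤ) (hl : 1 ≤ l) (n : ℕ) :
    l ^ (n+1) + (n+1) * l ^ n ≤ (l+1) ^ (n+1) := by
  induction n with
  | zero => simp
  | succ n ih =>
    have h1 : (0:ℤ) ≤ l ^ n := by positivity
    have e1 : l^(n+2) = l * l^(n+1) := by ring
    have e2 : l^(n+1) = l * l^n := by ring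
    have e3 : (l+1)^(n+2) = (l+1)^(n+1) * (l+1) := by ring
    have h2 : (l^(n+1) + ((n:ℤ)+1)*l^n) * (l+1) ≤ (l+1)^(n+1) * (l+1) := by
      apply mul_le_mul_of_nonneg_right _ (by linarith)
      push_cast at ih ⊢; linarith
    push_cast
    nlinarith [h2, h1, e1, e2, e3]

lemma growth_aux (G L u v : ℤ) (hL : 1 ≤ L) (hG : L + 1 ≤ G) (hu : 1 ≤ u) (hv : 1 ≤ v)
    (m : ℕ) (hn : (u+v)*L ≤ ((m+1 : ℕ) : ℤ)) :
    ((m+1 : ℕ) : ℤ) - (u+v)*L ≤ u * G^(m+1) - v * L^(m+1) := by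
  have hL0 : (0:ℤ) ≤ L := by linarith
  have hd1 : (1:ℤ) ≤ L^m := by
    calc (1:ℤ) = 1^m := (one_pow m).symm
    _ ≤ L^m := pow_le_pow_left₀ one_pos.le hL m
  have hA : L^(m+1) + ((m:ℤ)+1) * L^m ≤ G^(m+1) := by
    have h1 := pow_succ_ge L hL m
    have h2 : (L+1)^(m+1) ≤ G^(m+1) := pow_le_pow_left₀ (by linarith) hG (m+1)
    push_cast at h1 ⊢; linarith
  have hGpos : (0:ℤ) ≤ G^(m+1) := pow_nonneg (by linarith) _
  have hGu : G^(m+1) ≤ u * G^(m+1) := le_mul_of_one_le_left hGpos hu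
  have he5 : (u+v-1)*L = (u+v)*L - L := by ring
  have hx0 : (0:ℤ) ≤ ((m:ℤ)+1) - (u+v-1)*L := by push_cast at hn; linarith
  have hdx : ((m:ℤ)+1) - (u+v-1)*L ≤ L^m * (((m:ℤ)+1) - (u+v-1)*L) :=
    le_mul_of_one_le_left hx0 hd1
  have e4 : L^m * (((m:ℤ)+1) - (u+v-1)*L) = ((m:ℤ)+1)*L^m - (u+v-1)*L^(m+1) := by ring
  have hLp1 : (0:ℤ) ≤ L^(m+1) := pow_nonneg hL0 _
  have hvK : (v-1) * L^(m+1) ≤ (u+v-1)*L^(m+1) := by nlinarith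
  have he6 : (v-1) * L^(m+1) = v * L^(m+1) - L^(m+1) := by ring
  have he7 : (u+v-1)*L^(m+1) = (u+v)*L^(m+1) - L^(m+1) := by ring
  push_cast
  linarith [hA, hGu, hdx, e4, hvK]

set_option maxHeartbeats 2000000 in
/-- Two-variable Artin conjecture, unconditional part (Theorem 1):
for multiplicatively independent nonzero rationals `a, b`, the set of primes `p`
(not dividing numerators/denominators of `a`, `b`) such that `b mod p` lies in the
subgroup of `(ℤ/pℤ)ˣ` generated by `a mod p` is infinite. -/
theorem two_variable_artin_infinite
    (a b : ℚ) (ha : a ≠ 0) (hb : b ≠ 0)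
    (hindep : ∀ x y : ℤ, a ^ x * b ^ y = 1 → x = 0 ∧ y = 0) :
    {p : ℕ | p.Prime ∧
      ¬ (p : ℤ) ∣ a.num ∧ ¬ (p : ℤ) ∣ (a.den : ℤ) ∧
      ¬ (p : ℤ) ∣ b.num ∧ ¬ (p : ℤ) ∣ (b.den : ℤ) ∧
      ∃ n : ℕ,
        ((a.num : ZMod p) * ((a.den : ZMod p))⁻¹) ^ n
          = (b.num : ZMod p) * ((b.den : ZMod p))⁻¹}.Infinite := by
  by_contra hinf
  rw [Set.not_infinite] at hinf
  -- notation
  set c : ℤ := a.num with hc_def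
  set e : ℤ := b.num with he_def
  have hc0 : c ≠ 0 := Rat.num_ne_zero.mpr ha
  have he0 : e ≠ 0 := Rat.num_ne_zero.mpr hb
  have hd0 : (0:ℤ) < (a.den : ℤ) := by exact_mod_cast a.pos
  have hf0 : (0:ℤ) < (b.den : ℤ) := by exact_mod_cast b.pos
  set d : ℤ := (a.den : ℤ) with hd_def
  set f : ℤ := (b.den : ℤ) with hf_def
  set A : ℕ → ℤ := fun n => c ^ n * f - e * d ^ n with hA_def
  -- A n ≠ 0
  have hAne : ∀ n : ℕ, A n ≠ 0 := by
    intro n h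
    have h1 : c ^ n * f = e * d ^ n := by
      have : A n = c ^ n * f - e * d ^ n := rfl
      linarith [this ▸ h]
    have hab : a ^ (n : ℤ) * b ^ (-1 : ℤ) = 1 := by
      rw [zpow_natCast, zpow_neg, zpow_one, mul_inv_eq_one₀ hb]
      rw [← Rat.num_div_den a, ← Rat.num_div_den b, div_pow,
        div_eq_div_iff (by positivity) (by positivity)]
      rw [hc_def, he_def, hd_def, hf_def] at h1
      exact_mod_cast h1
    have := (hindep _ _ hab).2
    norm_num at this
  -- |a| ≠ 1
  have habsne : c.natAbs ≠ a.den := by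
    intro hEq
    have hred := a.reduced
    rw [hEq] at hred
    have hden1 : a.den = 1 := by simpa [Nat.Coprime, Nat.gcd_self] using hred
    have hc1 : c = 1 ∨ c = -1 := by
      rw [hden1] at hEq
      rcases Int.natAbs_eq c with h | h <;> rw [hEq] at h <;> simp [h]
    have haa : a = (c : ℚ) := by
      conv_lhs => rw [← Rat.num_div_den a]
      rw [hden1, hc_def]
      simp
    rcases hc1 with h | h
    · have := (hindep 1 0 (by rw [haa, h]; norm_num)).1
      norm_num at this
    · have := (hindep 2 0 (by rw [haa, h]; norm_num)).1
      norm_num at this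
  classical
  -- conversion helper
  have hconv : ∀ (p : ℕ) (z : ℤ), (p:ℤ) ∣ z ↔ p ∣ z.natAbs := fun p z => Int.natCast_dvd
  let F : Finset ℕ := hinf.toFinset
  have hFmem : ∀ {p : ℕ}, p ∈ F ↔ (p.Prime ∧
      ¬ (p : ℤ) ∣ c ∧ ¬ (p : ℤ) ∣ (a.den : ℤ) ∧
      ¬ (p : ℤ) ∣ e ∧ ¬ (p : ℤ) ∣ (b.den : ℤ) ∧
      ∃ n : ℕ,
        ((c : ZMod p) * ((a.den : ZMod p))⁻¹) ^ n
          = (e : ZMod p) * ((b.den : ZMod p))⁻¹) := fun {p} => Set.Finite.mem_toFinset hinf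
  have hcdef0 : c * d * e * f ≠ 0 :=
    mul_ne_zero (mul_ne_zero (mul_ne_zero hc0 hd0.ne') he0) hf0.ne'
  set Q : ℕ := (c * d * e * f).natAbs with hQ_def
  have hQ0 : Q ≠ 0 := Int.natAbs_ne_zero.mpr hcdef0
  have hef0 : (e * f).natAbs ≠ 0 := Int.natAbs_ne_zero.mpr (mul_ne_zero he0 hf0.ne')
  set n₀ : ℕ := (e * f).natAbs + 1 with hn₀_def
  have hA₀abs : (A n₀).natAbs ≠ 0 := Int.natAbs_ne_zero.mpr (hAne n₀)
  set t : ℕ → ℕ := fun p => (A n₀).natAbs.factorization p + 1 with ht_def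
  set R : ℕ := ∏ p ∈ F, (p ^ t p).totient with hR_def
  have hR1 : 0 < R :=
    Finset.prod_pos (fun p hp => Nat.totient_pos.mpr (pow_pos (hFmem.mp hp).1.pos _))
  set K : ℤ := |e| + f with hK_def
  set L : ℤ := min |c| d with hL_def
  have hK1 : 1 ≤ K := by have := abs_nonneg e; simp [hK_def]; linarith
  have hL1 : 1 ≤ L := le_min (Int.one_le_abs hc0) hd0
  have hKL0 : 0 ≤ K * L := by positivity
  set D : ℕ := (e * f).natAbs * (A n₀).natAbs with hD_def
  have hD0 : 0 < D := Nat.pos_of_ne_zero (mul_ne_zero hef0 hA₀abs)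
  set k : ℕ := D + (K * L).natAbs + 1 with hk_def
  set n : ℕ := n₀ + k * R with hn_def
  have hkn : k ≤ n := le_trans (Nat.le_mul_of_pos_right k hR1) (Nat.le_add_left _ _)
  have hn₀n : n₀ ≤ n := Nat.le_add_right _ _
  set N : ℕ := (A n).natAbs with hN_def
  have hN0 : N ≠ 0 := Int.natAbs_ne_zero.mpr (hAne n)
  -- growth: D < N
  have habsd : |c| ≠ d := by
    rw [Int.abs_eq_natAbs, hd_def]
    exact_mod_cast habsne
  have hDN : D < N := by
    obtain ⟨m, hm⟩ : ∃ m, n = m + 1 := ⟨n - 1, by omega⟩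
    have hnKL : K * L ≤ (n : ℤ) := by
      have h1 : (K*L).natAbs < k := by omega
      have h2 : K * L ≤ ((K*L).natAbs : ℤ) := le_trans (le_abs_self _) (by rw [Int.abs_eq_natAbs])
      have h3 : (k : ℤ) ≤ (n : ℤ) := by exact_mod_cast hkn
      have h4 : ((K*L).natAbs : ℤ) < (k:ℤ) := by exact_mod_cast h1
      linarith
    have hDn : (D : ℤ) + K * L < (n : ℤ) := by
      have h1 : D + (K*L).natAbs < k := by omega
      have h2 : K * L ≤ ((K*L).natAbs : ℤ) := le_trans (le_abs_self _) (by rw [Int.abs_eq_natAbs])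
      have h3 : (k : ℤ) ≤ (n : ℤ) := by exact_mod_cast hkn
      have h4 : ((D:ℤ) + (K*L).natAbs) < (k:ℤ) := by exact_mod_cast h1
      linarith
    have hgrow : (n : ℤ) - K * L ≤ |A n| := by
      have hAeq : A n = c ^ n * f - e * d ^ n := rfl
      rcases lt_or_gt_of_ne habsd with hlt | hgt
      · -- |c| < d
        have hLc : L = |c| := min_eq_left hlt.le
        have hG : |c| + 1 ≤ d := Int.add_one_le_iff.mpr hlt
        have hmain := growth_aux d |c| |e| f (Int.one_le_abs hc0) hG (Int.one_le_abs he0) hf0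
          m (by rw [← hm]; rw [hLc] at hnKL; rw [hK_def] at hnKL; linarith)
        have habs2 : |e| * d ^ n - |c| ^ n * f ≤ |A n| := by
          have h := abs_sub_abs_le_abs_sub (e * d ^ n) (c ^ n * f)
          rw [abs_mul, abs_mul, abs_pow, abs_pow, abs_of_pos hd0, abs_of_pos hf0,
            ← abs_sub_comm, ← hAeq] at h
          linarith
        rw [← hm] at hmain
        rw [hLc, hK_def]
        have hpowc : 0 ≤ |c| ^ n := pow_nonneg (abs_nonneg c) n
        nlinarith [hmain, habs2]
      · -- d < |c|
        have hLc : L = d := min_eq_right hgt.le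
        have hG : d + 1 ≤ |c| := Int.add_one_le_iff.mpr hgt
        have hmain := growth_aux |c| d f |e| hd0 hG hf0 (Int.one_le_abs he0)
          m (by rw [← hm]; rw [hLc] at hnKL; rw [hK_def] at hnKL; linarith)
        have habs1 : |c| ^ n * f - |e| * d ^ n ≤ |A n| := by
          have h := abs_sub_abs_le_abs_sub (c ^ n * f) (e * d ^ n)
          rw [abs_mul, abs_mul, abs_pow, abs_pow, abs_of_pos hd0, abs_of_pos hf0,
            ← hAeq] at h
          linarith
        rw [← hm] at hmain
        rw [hLc, hK_def]
        nlinarith [hmain, habs1]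
    have : (D : ℤ) < (N : ℤ) := by
      rw [hN_def, ← Int.abs_eq_natAbs]
      linarith
    exact_mod_cast this
  -- divisibility: N ∣ D
  have hdvd : N ∣ D := by
    rw [← Nat.factorization_le_iff_dvd hN0 hD0.ne']
    rw [Finsupp.le_def]
    intro p
    by_cases hp : p.Prime
    swap
    · simp [Nat.factorization_eq_zero_of_not_prime _ hp]
    by_cases hpN : p ∣ N
    swap
    · simp [Nat.factorization_eq_zero_of_not_dvd hpN]
    have hDfact : D.factorization p
        = (e*f).natAbs.factorization p + (A n₀).natAbs.factorization p := by
      rw [hD_def, Nat.factorization_mul hef0 hA₀abs]; simp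
    have hpAn : (p:ℤ) ∣ A n := (hconv p _).mpr hpN
    by_cases hpQ : p ∣ Q
    · -- p divides c*d*e*f
      rw [hDfact]
      have hene : e.natAbs ≠ 0 := Int.natAbs_ne_zero.mpr he0
      have hfne : f.natAbs ≠ 0 := Int.natAbs_ne_zero.mpr hf0.ne'
      have hefsplit : (e*f).natAbs.factorization p
          = e.natAbs.factorization p + f.natAbs.factorization p := by
        rw [Int.natAbs_mul, Nat.factorization_mul hene hfne]; simp
      suffices h : N.factorization p ≤ (e*f).natAbs.factorization p by omega
      by_contra hgt
      push_neg at hgt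
      set w := (e*f).natAbs.factorization p with hw_def
      have hwlt : w < (e*f).natAbs := Nat.factorization_lt p hef0
      have hw1n : w + 1 ≤ n := by omega
      have hpw : p ^ (w+1) ∣ N := (hp.pow_dvd_iff_le_factorization hN0).mpr hgt
      have hpwA : (p:ℤ)^(w+1) ∣ A n := by
        rw [← Int.natAbs_dvd_natAbs]
        simpa [Int.natAbs_pow] using hpw
      by_cases hpc : (p:ℤ) ∣ c
      · have hpd : ¬ p ∣ a.den := by
          intro hpd
          have h1 : p ∣ c.natAbs := (hconv p c).mp hpc
          have h2 : p ∣ Nat.gcd c.natAbs a.den := Nat.dvd_gcd h1 hpd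
          rw [a.reduced] at h2
          exact hp.one_lt.ne' (Nat.dvd_one.mp h2)
        have h1 : (p:ℤ)^(w+1) ∣ c ^ n * f :=
          dvd_mul_of_dvd_left ((pow_dvd_pow_of_dvd hpc (w+1)).trans (pow_dvd_pow c hw1n)) f
        have h2 : (p:ℤ)^(w+1) ∣ e * d ^ n := by
          have hr : e * d ^ n = c ^ n * f - A n := by simp [hA_def]
          rw [hr]; exact dvd_sub h1 hpwA
        have h3 : p^(w+1) ∣ e.natAbs * a.den ^ n := by
          have := Int.natAbs_dvd_natAbs.mpr h2
          simpa [Int.natAbs_mul, Int.natAbs_pow, hd_def] using this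
        have hcop : Nat.Coprime (p^(w+1)) (a.den ^ n) :=
          Nat.Coprime.pow _ _ ((Nat.Prime.coprime_iff_not_dvd hp).mpr hpd)
        have h4 : p^(w+1) ∣ e.natAbs := hcop.dvd_of_dvd_mul_right h3
        have h5 : w + 1 ≤ e.natAbs.factorization p :=
          (hp.pow_dvd_iff_le_factorization hene).mp h4
        omega
      · by_cases hpd2 : (p:ℤ) ∣ d
        · have hpcn : ¬ p ∣ c.natAbs := fun hh => hpc ((hconv p c).mpr hh)
          have h1 : (p:ℤ)^(w+1) ∣ e * d ^ n :=
            dvd_mul_of_dvd_right ((pow_dvd_pow_of_dvd hpd2 (w+1)).trans (pow_dvd_pow d hw1n)) e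
          have h2 : (p:ℤ)^(w+1) ∣ c ^ n * f := by
            have hr : c ^ n * f = A n + e * d ^ n := by simp [hA_def]
            rw [hr]; exact dvd_add hpwA h1
          have h3 : p^(w+1) ∣ c.natAbs ^ n * f.natAbs := by
            have := Int.natAbs_dvd_natAbs.mpr h2
            simpa [Int.natAbs_mul, Int.natAbs_pow] using this
          have hcop : Nat.Coprime (p^(w+1)) (c.natAbs ^ n) :=
            Nat.Coprime.pow _ _ ((Nat.Prime.coprime_iff_not_dvd hp).mpr hpcn)
          have h4 : p^(w+1) ∣ f.natAbs := hcop.dvd_of_dvd_mul_left h3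
          have h5 : w + 1 ≤ f.natAbs.factorization p :=
            (hp.pow_dvd_iff_le_factorization hfne).mp h4
          omega
        · -- p ∤ c, p ∤ d but p ∣ Q, so p ∣ e or p ∣ f; both contradict p ∣ A n
          have hPP : Prime (p:ℤ) := Nat.prime_iff_prime_int.mp hp
          have hQint : (p:ℤ) ∣ c * d * e * f := by
            rw [hconv]; exact hpQ
          have hef : (p:ℤ) ∣ e ∨ (p:ℤ) ∣ f := by
            rcases hPP.dvd_mul.mp hQint with h | h
            · rcases hPP.dvd_mul.mp h with h' | h'
              · rcases hPP.dvd_mul.mp h' with h'' | h''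
                · exact absurd h'' hpc
                · exact absurd h'' hpd2
              · exact Or.inl h'
            · exact Or.inr h
          have hpcn : ¬ (p:ℤ) ∣ c ^ n := fun hh => hpc (hPP.dvd_of_dvd_pow hh)
          have hpdn : ¬ (p:ℤ) ∣ d ^ n := fun hh => hpd2 (hPP.dvd_of_dvd_pow hh)
          rcases hef with hpe | hpf
          · -- p ∣ e, then p ∤ f since b reduced
            have hpf : ¬ (p:ℤ) ∣ f := by
              intro hpf
              have h1 : p ∣ e.natAbs := (hconv p e).mp hpe
              have h1' : p ∣ b.den := by
                have := (hconv p f).mp hpf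
                simpa [hf_def, Int.natAbs_natCast] using this
              have h2 : p ∣ Nat.gcd e.natAbs b.den := Nat.dvd_gcd h1 h1'
              rw [b.reduced] at h2
              exact hp.one_lt.ne' (Nat.dvd_one.mp h2)
            have h1 : (p:ℤ) ∣ c ^ n * f := by
              have hr : c ^ n * f = A n + e * d ^ n := by simp [hA_def]
              rw [hr]; exact dvd_add hpAn (dvd_mul_of_dvd_left hpe _)
            rcases hPP.dvd_mul.mp h1 with h | h
            · exact absurd h hpcn
            · exact absurd h hpf
          · -- p ∣ f, then p ∤ e
            have hpe : ¬ (p:ℤ) ∣ e := by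
              intro hpe
              have h1 : p ∣ e.natAbs := (hconv p e).mp hpe
              have h1' : p ∣ b.den := by
                have := (hconv p f).mp hpf
                simpa [hf_def, Int.natAbs_natCast] using this
              have h2 : p ∣ Nat.gcd e.natAbs b.den := Nat.dvd_gcd h1 h1'
              rw [b.reduced] at h2
              exact hp.one_lt.ne' (Nat.dvd_one.mp h2)
            have h1 : (p:ℤ) ∣ e * d ^ n := by
              have hr : e * d ^ n = c ^ n * f - A n := by simp [hA_def]
              rw [hr]; exact dvd_sub (dvd_mul_of_dvd_right hpf _) hpAn
            rcases hPP.dvd_mul.mp h1 with h | h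
            · exact absurd h hpe
            · exact absurd h hpdn
    · -- p does not divide c*d*e*f : p is in F, use periodicity
      have hpc : ¬ (p:ℤ) ∣ c := fun h => hpQ ((hconv p _).mp (h.trans ⟨d*e*f, by ring⟩))
      have hpd : ¬ (p:ℤ) ∣ d := fun h => hpQ ((hconv p _).mp (h.trans ⟨c*e*f, by ring⟩))
      have hpe : ¬ (p:ℤ) ∣ e := fun h => hpQ ((hconv p _).mp (h.trans ⟨c*d*f, by ring⟩))
      have hpf : ¬ (p:ℤ) ∣ f := fun h => hpQ ((hconv p _).mp (h.trans ⟨c*d*e, by ring⟩))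
      have hpdn : ¬ p ∣ a.den := by
        intro hh; exact hpd (by rw [hd_def]; exact_mod_cast Int.natCast_dvd_natCast.mpr hh)
      have hpfn : ¬ p ∣ b.den := by
        intro hh; exact hpf (by rw [hf_def]; exact_mod_cast Int.natCast_dvd_natCast.mpr hh)
      haveI : Fact p.Prime := ⟨hp⟩
      have hdz : (a.den : ZMod p) ≠ 0 := by
        rw [Ne, ZMod.natCast_eq_zero_iff]; exact hpdn
      have hfz : (b.den : ZMod p) ≠ 0 := by
        rw [Ne, ZMod.natCast_eq_zero_iff]; exact hpfn
      have hz : ((A n : ℤ) : ZMod p) = 0 := (ZMod.intCast_zmod_eq_zero_iff_dvd _ p).mpr hpAn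
      have hz2 : (c : ZMod p)^n * (b.den : ZMod p) = (e : ZMod p) * (a.den : ZMod p)^n := by
        have h0 : ((c ^ n * f - e * d ^ n : ℤ) : ZMod p) = 0 := hz
        rw [hd_def, hf_def] at h0
        push_cast at h0
        linear_combination h0
      have hpmem : p ∈ F := by
        refine hFmem.mpr ⟨hp, hpc, ?_, hpe, ?_, n, ?_⟩
        · rw [← hd_def]; exact hpd
        · rw [← hf_def]; exact hpf
        · rw [mul_pow, inv_pow, ← div_eq_mul_inv, ← div_eq_mul_inv,
            div_eq_div_iff (pow_ne_zero _ hdz) hfz]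
          linear_combination hz2
      obtain ⟨s, hs⟩ := Finset.dvd_prod_of_mem (fun p => (p ^ t p).totient) hpmem
      have hns : n = n₀ + (k*s) * (p^(t p)).totient := by
        rw [hn_def, hR_def, hs]; ring
      have hpcn : ¬ p ∣ c.natAbs := fun hh => hpc ((hconv p c).mpr hh)
      have hcop1 : Nat.Coprime c.natAbs (p^(t p)) :=
        Nat.Coprime.pow_right _ (Nat.coprime_comm.mp ((Nat.Prime.coprime_iff_not_dvd hp).mpr hpcn))
      have hcop2 : Nat.Coprime d.natAbs (p^(t p)) := by
        have : d.natAbs = a.den := by rw [hd_def]; exact Int.natAbs_natCast _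
        rw [this]
        exact Nat.Coprime.pow_right _
          (Nat.coprime_comm.mp ((Nat.Prime.coprime_iff_not_dvd hp).mpr hpdn))
      have hper := A_period (p^(t p)) c d e f hcop1 hcop2 n₀ (k*s)
      have hperA : ((A n : ℤ) : ZMod (p^(t p))) = ((A n₀ : ℤ) : ZMod (p^(t p))) := by
        have e1 : A n = c ^ (n₀ + (k*s) * (p^(t p)).totient) * f
            - e * d ^ (n₀ + (k*s) * (p^(t p)).totient) := by rw [← hns]
        have e2 : A n₀ = c ^ n₀ * f - e * d ^ n₀ := rfl
        rw [e1, e2]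
        exact hper
      have hnotdvd : ¬ p^(t p) ∣ N := by
        intro hh
        have hdd : (p:ℤ)^(t p) ∣ A n := by
          rw [← Int.natAbs_dvd_natAbs]
          simpa [Int.natAbs_pow] using hh
        have h1 : ((A n : ℤ) : ZMod (p^(t p))) = 0 := by
          rw [ZMod.intCast_zmod_eq_zero_iff_dvd]
          push_cast
          exact hdd
        have h2 : (((p:ℕ)^(t p) : ℕ) : ℤ) ∣ A n₀ := by
          rw [← ZMod.intCast_zmod_eq_zero_iff_dvd, ← hperA]
          exact h1
        have h4 : p^(t p) ∣ (A n₀).natAbs := by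
          rw [← Int.natAbs_dvd_natAbs] at h2
          simpa [Int.natAbs_pow] using h2
        have h5 := (hp.pow_dvd_iff_le_factorization hA₀abs).mp h4
        have h6 : t p = (A n₀).natAbs.factorization p + 1 := rfl
        omega
      have h7 : N.factorization p < t p := by
        by_contra hge
        push_neg at hge
        exact hnotdvd ((hp.pow_dvd_iff_le_factorization hN0).mpr hge)
      have h8 : t p = (A n₀).natAbs.factorization p + 1 := rfl
      rw [hDfact]
      omega
  have := Nat.le_of_dvd hD0 hdvd
  omega
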